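/- For multiplicative characters A, B, C of F_q and x, y ∈ F_q, F₁(A;B,ε;C;x,y) = ε(y)·₂F₁[B,A;C;x] − ε(x)·(ĀC)(1−y)·(BC̄)(y)·B̄(y−x), where ε is the trivial character extended by ε(0)=0. -/

import Mathlib

open Finset

variable {F : Type*} [Field F] [Fintype F] [DecidableEq F]

/-- Finite-field binomial coefficient `[A choose B] = B(-1) * J(A, B⁻¹)`. -/
noncomputable def ffBinom (A B : MulChar F ℂ) : ℂ :=
  B (-1) * jacobiSum A B⁻¹

/-- Finite-field Gauss hypergeometric function
`₂F₁[A,B;C;x] = ε(x)·(BC)(-1)·∑_u B(u)(B̅C)(1-u)A̅(1-ux)`. -/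
noncomputable def ffHyp (A B C : MulChar F ℂ) (x : F) : ℂ :=
  (1 : MulChar F ℂ) x * (B * C) (-1) *
    ∑ u : F, B u * (B⁻¹ * C) (1 - u) * A⁻¹ (1 - u * x)

/-- Finite-field Appell function
`F₁(A;B,B';C;x,y) = ε(xy)·(AC)(-1)·∑_u A(u)(A̅C)(1-u)B̅(1-ux)B̅'(1-uy)`. -/
noncomputable def ffAppellF1 (A B B' C : MulChar F ℂ) (x y : F) : ℂ :=
  (1 : MulChar F ℂ) (x * y) * (A * C) (-1) *
    ∑ u : F, A u * (A⁻¹ * C) (1 - u) * B⁻¹ (1 - u * x) * B'⁻¹ (1 - u * y)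

/-- δ(0)=1, δ(t)=0 otherwise. -/
noncomputable def ffDelta (x : F) : ℂ := if x = 0 then 1 else 0

set_option linter.unusedSectionVars false

lemma one_apply_ne' {z : F} (hz : z ≠ 0) : (1 : MulChar F ℂ) z = 1 :=
  MulChar.one_apply (isUnit_iff_ne_zero.mpr hz)

theorem stmt6 (A B C : MulChar F ℂ) (x y : F) :
    ffAppellF1 A B 1 C x y =
      (1 : MulChar F ℂ) y * ffHyp B A C x -
        (1 : MulChar F ℂ) x * (A⁻¹ * C) (1 - y) * (B * C⁻¹) y * B⁻¹ (y - x) := by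
  rcases eq_or_ne y 0 with hy | hy
  · simp [ffAppellF1, hy, MulChar.map_zero]
  · unfold ffAppellF1 ffHyp
    have h1 : ∀ u : F, (1 : MulChar F ℂ)⁻¹ (1 - u * y) = if u = y⁻¹ then 0 else 1 := by
      intro u
      rw [inv_one]
      rcases eq_or_ne u y⁻¹ with h | h
      · rw [if_pos h, h, inv_mul_cancel₀ hy, sub_self, MulChar.map_zero]
      · rw [if_neg h, one_apply_ne']
        intro h0
        apply h
        field_simp at h0 ⊢
        linear_combination -h0
    have hsum : ∑ u : F, A u * (A⁻¹ * C) (1 - u) * B⁻¹ (1 - u * x) * (1 : MulChar F ℂ)⁻¹ (1 - u * y)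
        = (∑ u : F, A u * (A⁻¹ * C) (1 - u) * B⁻¹ (1 - u * x))
          - A y⁻¹ * (A⁻¹ * C) (1 - y⁻¹) * B⁻¹ (1 - y⁻¹ * x) := by
      have He : ∀ u : F, A u * (A⁻¹ * C) (1 - u) * B⁻¹ (1 - u * x) * (1 : MulChar F ℂ)⁻¹ (1 - u * y)
          = A u * (A⁻¹ * C) (1 - u) * B⁻¹ (1 - u * x)
            - (if u = y⁻¹ then A u * (A⁻¹ * C) (1 - u) * B⁻¹ (1 - u * x) else 0) := by
        intro u
        rw [h1]
        split <;> ring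
      rw [Finset.sum_congr rfl fun u _ => He u, Finset.sum_sub_distrib]
      simp
    rw [hsum, map_mul, one_apply_ne' hy, mul_one, mul_sub]
    have e1 : (1:F) - y⁻¹ = y⁻¹ * -1 * (1 - y) := by field_simp; ring
    have e2 : (1:F) - y⁻¹ * x = y⁻¹ * (y - x) := by field_simp
    have hA1 : A⁻¹ y⁻¹ * A y⁻¹ = 1 := by
      rw [← MulChar.mul_apply, MulChar.inv_mul, one_apply_ne' (inv_ne_zero hy)]
    have hA2 : A⁻¹ (-1) * A (-1) = 1 := by
      rw [← MulChar.mul_apply, MulChar.inv_mul, one_apply_ne']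
      norm_num
    have hC : C (-1) * C (-1) = 1 := by rw [← map_mul]; norm_num
    have hB : B⁻¹ y⁻¹ = B y := by rw [MulChar.inv_apply', inv_inv]
    have hCy : C y⁻¹ = C⁻¹ y := (MulChar.inv_apply' C y).symm
    have key : (A * C) (-1) * (A y⁻¹ * (A⁻¹ * C) (1 - y⁻¹) * B⁻¹ (1 - y⁻¹ * x))
        = (A⁻¹ * C) (1 - y) * (B * C⁻¹) y * B⁻¹ (y - x) := by
      rw [e1, e2, map_mul, map_mul, map_mul,
        MulChar.mul_apply A C, MulChar.mul_apply A⁻¹ C y⁻¹, MulChar.mul_apply A⁻¹ C (-1),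
        MulChar.mul_apply B C⁻¹, hB, hCy]
      linear_combination (B y * C⁻¹ y * (A⁻¹ * C) (1 - y) * B⁻¹ (y - x)) *
          ((A⁻¹ (-1) * A (-1)) * (C (-1) * C (-1)) * hA1
            + (C (-1) * C (-1)) * hA2 + hC)
    linear_combination (-((1 : MulChar F ℂ) x)) * key
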